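/- Let R be a commutative Noetherian ring and let f₁,…,fᵣ ∈ R generate a proper ideal I. Then the Koszul complex K_•(f₁,…,fᵣ) has vanishing homology in all positive homological degrees if and only if depth I = r. -/

import Mathlib

/-!
STATEMENT 3: for elements `f₁,…,fᵣ` generating a proper ideal `I` of a commutative
Noetherian ring `R`, the Koszul complex `K_•(f₁,…,fᵣ)` has vanishing homology in all
positive homological degrees if and only if `depth I = r`.

The Koszul complex is realised concretely as in the paper: its `p`-th term is the free
module on the `p`-element subsets of `{1,…,r}` and the differential is
`d(e_{i₁} ∧ ⋯ ∧ e_{i_p}) = ∑_j (−1)^{j+1} f_{i_j} e_{i₁} ∧ ⋯ ∧ ê_{i_j} ∧ ⋯ ∧ e_{i_p}`.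
`depth I` is the grade of `I` on `R`, the common length of all maximal `R`-regular
sequences contained in `I`; since (over a Noetherian ring) every regular sequence in `I`
extends to a maximal one and all maximal ones have the same length, `depth I = n` is
expressed as: `I` contains a regular sequence of length `n` and none of length `> n`.
-/

noncomputable section

/-- The `p`-th term `⋀^p Rʳ` of the Koszul complex, realised as the free module on the
`p`-element subsets of `Fin r`. -/
abbrev KoszulTerm (A : Type) [CommRing A] (r p : ℕ) : Type :=
  {S : Finset (Fin r) // S.card = p} → A

/-- The Koszul differential `⋀^{p+1} Rʳ → ⋀^p Rʳ` associated to `f₁,…,fᵣ`. -/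
noncomputable def koszulD {A : Type} [CommRing A] {r : ℕ} (f : Fin r → A) (p : ℕ) :
    KoszulTerm A r (p + 1) →ₗ[A] KoszulTerm A r p :=
  LinearMap.pi fun T => ∑ i : Fin r,
    if h : i ∈ T.1 then 0
    else ((-1 : A) ^ (T.1.filter (· < i)).card * f i) •
      LinearMap.proj (R := A)
        (⟨insert i T.1, by rw [Finset.card_insert_of_notMem h, T.2]⟩ :
          {S : Finset (Fin r) // S.card = p + 1})

/-- `f₁,…,fₖ` is a regular sequence: `(f₁,…,fₖ) ≠ R` and each `fᵢ` is a nonzerodivisor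
on `R/(f₁,…,f_{i−1})`. -/
def IsRegularSeq {A : Type} [CommRing A] {k : ℕ} (f : Fin k → A) : Prop :=
  Ideal.span (Set.range f) ≠ ⊤ ∧
  ∀ (i : Fin k) (x : A), f i * x ∈ Ideal.span (f '' {j | j < i}) →
    x ∈ Ideal.span (f '' {j | j < i})

/-- `depth I ≥ n`: the ideal `I` contains a regular sequence of length `n`. -/
def depthGE {A : Type} [CommRing A] (I : Ideal A) (n : ℕ) : Prop :=
  ∃ f : Fin n → A, (∀ i, f i ∈ I) ∧ IsRegularSeq f

/-- `depth I = n`: the grade of `I` on `R` is `n`, i.e. `I` contains a regular sequence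
of length `n` and every regular sequence contained in `I` has length at most `n`
(equivalently, over a Noetherian ring, every maximal regular sequence in `I` has
length exactly `n`). -/
def depthEq {A : Type} [CommRing A] (I : Ideal A) (n : ℕ) : Prop :=
  depthGE I n ∧ ∀ k : ℕ, depthGE I k → k ≤ n

namespace KProof

variable {A : Type} [CommRing A] {r : ℕ}

/-- The sign `(-1)^{#{k ∈ S | k < i}}`. -/
def eps (A : Type) [CommRing A] {r : ℕ} (i : Fin r) (S : Finset (Fin r)) : A :=
  (-1 : A) ^ (S.filter (· < i)).card

lemma eps_sq (i : Fin r) (S : Finset (Fin r)) : eps A i S * eps A i S = 1 := by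
  rw [eps, ← pow_add]
  exact Even.neg_one_pow ⟨_, rfl⟩

lemma eps_insert (i j : Fin r) (S : Finset (Fin r)) (hj : j ∉ S) :
    eps A i (insert j S) = (if j < i then (-1 : A) else 1) * eps A i S := by
  rw [eps, eps, Finset.filter_insert]
  split_ifs with h
  · rw [Finset.card_insert_of_notMem (fun hc => hj (Finset.mem_filter.1 hc).1), pow_succ]
    ring
  · rw [one_mul]

lemma eps_insert_self (j : Fin r) (S : Finset (Fin r)) :
    eps A j (insert j S) = eps A j S := by
  rw [eps, eps, Finset.filter_insert, if_neg (lt_irrefl j)]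

lemma eps_erase_self (j : Fin r) (S : Finset (Fin r)) :
    eps A j (S.erase j) = eps A j S := by
  rw [eps, eps, Finset.filter_erase, Finset.erase_eq_of_notMem]
  intro hc
  exact absurd (Finset.mem_filter.1 hc).2 (lt_irrefl j)

lemma eps_erase (i j : Fin r) (S : Finset (Fin r)) (hj : j ∈ S) :
    eps A i (S.erase j) = (if j < i then (-1 : A) else 1) * eps A i S := by
  have h1 : eps A i S = eps A i (insert j (S.erase j)) := by rw [Finset.insert_erase hj]
  rw [h1, eps_insert i j _ (Finset.notMem_erase j S)]
  split_ifs with h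
  · ring
  · ring

lemma if_lt_add {i k : Fin r} (h : i ≠ k) :
    (if i < k then (-1 : A) else 1) + (if k < i then (-1 : A) else 1) = 0 := by
  rcases lt_trichotomy i k with h1 | h1 | h1
  · rw [if_pos h1, if_neg (asymm h1)]; ring
  · exact absurd h1 h
  · rw [if_neg (asymm h1), if_pos h1]; ring

lemma eps_antisymm {i k : Fin r} {S : Finset (Fin r)} (h : i ≠ k) (hi : i ∉ S) (hk : k ∉ S) :
    eps A i S * eps A k (insert i S) + eps A k S * eps A i (insert k S) = 0 := by
  rw [eps_insert k i S hi, eps_insert i k S hk]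
  have := if_lt_add (A := A) h
  linear_combination (eps A i S * eps A k S) * this

lemma zcongr {p : ℕ} (z : KoszulTerm A r p) {T T' : {S : Finset (Fin r) // S.card = p}}
    (h : T.1 = T'.1) : z T = z T' := by
  rw [Subtype.ext h]

lemma koszulD_apply (f : Fin r → A) (p : ℕ) (z : KoszulTerm A r (p + 1))
    (T : {S : Finset (Fin r) // S.card = p}) :
    koszulD f p z T = ∑ i : Fin r,
      if h : i ∈ T.1 then 0
      else (eps A i T.1 * f i) *
        z ⟨insert i T.1, by rw [Finset.card_insert_of_notMem h, T.2]⟩ := by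
  simp only [koszulD, LinearMap.pi_apply, LinearMap.coe_sum, Finset.sum_apply]
  refine Finset.sum_congr rfl fun i _ => ?_
  split_ifs with h
  · rfl
  · rfl

lemma zapp {p : ℕ} (z : KoszulTerm A r p) {S S' : Finset (Fin r)} (h : S = S')
    (hS' : S'.card = p) {hS : S.card = p} : z ⟨S, hS⟩ = z ⟨S', hS'⟩ := by
  subst h; rfl

/-- Exterior multiplication by `e_j`. -/
def theta (j : Fin r) {p : ℕ} (z : KoszulTerm A r p) : KoszulTerm A r (p + 1) :=
  fun T => if h : j ∈ T.1 then
    eps A j T.1 * z ⟨T.1.erase j, by simp [Finset.card_erase_of_mem h, T.2]⟩ else 0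

lemma d_theta_not_mem (f : Fin r → A) (j : Fin r) {p : ℕ} (z : KoszulTerm A r p)
    (T : {S : Finset (Fin r) // S.card = p}) (hj : j ∉ T.1) :
    koszulD f p (theta j z) T = f j * z T := by
  obtain ⟨Tv, hTv⟩ := T
  rw [koszulD_apply]
  refine (Finset.sum_eq_single_of_mem j (Finset.mem_univ j) fun i _ hij => ?_).trans ?_
  · by_cases hi : i ∈ Tv
    · rw [dif_pos hi]
    · rw [dif_neg hi]
      simp only [theta]
      rw [dif_neg (by simp [Finset.mem_insert, hij.symm, hj]), mul_zero]
  · rw [dif_neg hj]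
    simp only [theta]
    rw [dif_pos (Finset.mem_insert_self j Tv)]
    rw [zapp z (Finset.erase_insert hj) hTv, eps_insert_self]
    linear_combination (f j * z ⟨Tv, hTv⟩) * eps_sq (A := A) j Tv

lemma d_theta_mem (f : Fin r → A) (j : Fin r) {q : ℕ} (z : KoszulTerm A r (q + 1))
    (T : {S : Finset (Fin r) // S.card = q + 1}) (hj : j ∈ T.1) :
    koszulD f (q + 1) (theta j z) T = f j * z T -
      eps A j T.1 * koszulD f q z ⟨T.1.erase j, by simp [Finset.card_erase_of_mem hj, T.2]⟩ := by
  obtain ⟨Tv, hTv⟩ := T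
  simp only at hj ⊢
  rw [koszulD_apply, koszulD_apply, Finset.mul_sum, eq_sub_iff_add_eq, ← Finset.sum_add_distrib]
  refine (Finset.sum_eq_single_of_mem j (Finset.mem_univ j) fun i _ hij => ?_).trans ?_
  · by_cases hi : i ∈ Tv
    · rw [dif_pos hi, dif_pos (Finset.mem_erase.2 ⟨hij, hi⟩), mul_zero, add_zero]
    · rw [dif_neg hi, dif_neg (fun hc => hi (Finset.mem_of_mem_erase hc))]
      simp only [theta]
      rw [dif_pos (Finset.mem_insert_of_mem hj)]
      have hcard : (insert i (Tv.erase j)).card = q + 1 := by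
        rw [Finset.card_insert_of_notMem (fun hc => hi (Finset.mem_of_mem_erase hc)),
          Finset.card_erase_of_mem hj, hTv]
        omega
      rw [zapp z (Finset.erase_insert_of_ne hij) hcard,
        zapp z (rfl : insert i (Tv.erase j) = insert i (Tv.erase j)) hcard,
        eps_insert j i Tv hi, eps_erase i j Tv hj]
      have key := if_lt_add (A := A) (show i ≠ j from hij)
      linear_combination (eps A i Tv * eps A j Tv * f i * z ⟨insert i (Tv.erase j), hcard⟩) * key
  · rw [dif_pos hj, dif_neg (Finset.notMem_erase j Tv), zero_add]
    rw [zapp z (Finset.insert_erase hj) hTv, eps_erase_self]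
    linear_combination (f j * z ⟨Tv, hTv⟩) * eps_sq (A := A) j Tv

lemma koszulD_koszulD (f : Fin r → A) (p : ℕ) (w : KoszulTerm A r (p + 2)) :
    koszulD f p (koszulD f (p + 1) w) = 0 := by
  funext T
  obtain ⟨Tv, hTv⟩ := T
  rw [koszulD_apply]
  show _ = (0 : A)
  set G : Fin r → Fin r → A := fun i k =>
    dite (i ∈ Tv) (fun _ => (0 : A)) (fun hi =>
      dite (k ∈ insert i Tv) (fun _ => (0 : A)) (fun hk =>
        (eps A i Tv * f i) * ((eps A k (insert i Tv) * f k) *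
          w ⟨insert k (insert i Tv), by
            rw [Finset.card_insert_of_notMem hk, Finset.card_insert_of_notMem hi, hTv]⟩)))
    with hG
  have diag : ∀ i : Fin r, G i i = 0 := by
    intro i
    by_cases hi : i ∈ Tv
    · simp only [hG]; rw [dif_pos hi]
    · simp only [hG]; rw [dif_neg hi, dif_pos (Finset.mem_insert_self i Tv)]
  have anti : ∀ i k : Fin r, G i k + G k i = 0 := by
    intro i k
    by_cases hi : i ∈ Tv
    · have h1 : G i k = 0 := by simp only [hG]; rw [dif_pos hi]
      have h2 : G k i = 0 := by
        by_cases hk : k ∈ Tv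
        · simp only [hG]; rw [dif_pos hk]
        · simp only [hG]; rw [dif_neg hk, dif_pos (Finset.mem_insert_of_mem hi)]
      rw [h1, h2, add_zero]
    · by_cases hk : k ∈ insert i Tv
      · rcases Finset.mem_insert.1 hk with hk1 | hk2
        · subst hk1; rw [diag, add_zero]
        · have h1 : G i k = 0 := by simp only [hG]; rw [dif_neg hi, dif_pos hk]
          have h2 : G k i = 0 := by simp only [hG]; rw [dif_pos hk2]
          rw [h1, h2, add_zero]
      · have hki : k ≠ i := fun hc => hk (hc ▸ Finset.mem_insert_self i Tv)
        have hkT : k ∉ Tv := fun hc => hk (Finset.mem_insert_of_mem hc)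
        have hik : i ∉ insert k Tv := by
          intro hc
          rcases Finset.mem_insert.1 hc with h | h
          · exact hki h.symm
          · exact hi h
        have hcard : (insert k (insert i Tv)).card = p + 2 := by
          rw [Finset.card_insert_of_notMem hk, Finset.card_insert_of_notMem hi, hTv]
        simp only [hG]
        rw [dif_neg hi, dif_neg hk, dif_neg hkT, dif_neg hik]
        rw [zapp w (Finset.insert_comm i k Tv) hcard]
        have key := eps_antisymm (A := A) (show i ≠ k from fun hc => hki hc.symm) hi hkT
        linear_combination (f i * f k * w ⟨insert k (insert i Tv), hcard⟩) * key
  have hsum : ∀ i : Fin r,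
      (if h : i ∈ Tv then (0 : A)
        else (eps A i Tv * f i) * koszulD f (p + 1) w
          ⟨insert i Tv, by rw [Finset.card_insert_of_notMem h, hTv]⟩)
      = ∑ k : Fin r, G i k := by
    intro i
    by_cases hi : i ∈ Tv
    · rw [dif_pos hi]
      refine (Finset.sum_eq_zero fun k _ => ?_).symm
      simp only [hG]; rw [dif_pos hi]
    · rw [dif_neg hi, koszulD_apply, Finset.mul_sum]
      refine Finset.sum_congr rfl fun k _ => ?_
      by_cases hk : k ∈ insert i Tv
      · rw [dif_pos hk, mul_zero]
        simp only [hG]; rw [dif_neg hi, dif_pos hk]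
      · rw [dif_neg hk]
        simp only [hG]; rw [dif_neg hi, dif_neg hk]
  rw [Finset.sum_congr rfl fun i _ => hsum i, ← Finset.sum_product']
  refine Finset.sum_ninvolution (fun x => (x.2, x.1)) (fun x => anti x.1 x.2)
    (fun x hx hc => hx ?_) (fun x => Finset.mem_univ _) (fun x => rfl)
  have h12 : x.2 = x.1 := congrArg Prod.fst hc
  rw [h12]
  exact diag x.1

lemma d_theta_zero (f : Fin r → A) (j : Fin r) (z : KoszulTerm A r 0) :
    koszulD f 0 (theta j z) = f j • z := by
  funext T
  have hT : j ∉ T.1 := by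
    have h := T.2
    rw [Finset.card_eq_zero] at h
    simp [h]
  rw [d_theta_not_mem f j z T hT]
  rfl

lemma d_theta_succ (f : Fin r → A) (j : Fin r) {q : ℕ} (z : KoszulTerm A r (q + 1)) :
    koszulD f (q + 1) (theta j z) + theta j (koszulD f q z) = f j • z := by
  funext T
  show koszulD f (q + 1) (theta j z) T + theta j (koszulD f q z) T = f j * z T
  by_cases hj : j ∈ T.1
  · rw [d_theta_mem f j z T hj]
    simp only [theta]
    rw [dif_pos hj]
    ring
  · rw [d_theta_not_mem f j z T hj]
    simp only [theta]
    rw [dif_neg hj, add_zero]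

/-- `z` is a cycle mod `J` (trivially true in degree `0`). -/
def cyc (f : Fin r → A) (J : Ideal A) : ∀ {p : ℕ}, KoszulTerm A r p → Prop
  | 0, _ => True
  | _ + 1, z => ∀ T, koszulD f _ z T ∈ J

/-- Exactness of the Koszul complex at level `p`, modulo `J`. -/
def ExJ (f : Fin r → A) (J : Ideal A) (p : ℕ) : Prop :=
  ∀ z : KoszulTerm A r p, cyc f J z →
    ∃ w : KoszulTerm A r (p + 1), ∀ T, z T - koszulD f p w T ∈ J

lemma isEmpty_level {p : ℕ} (h : r < p) : IsEmpty {S : Finset (Fin r) // S.card = p} := by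
  refine ⟨fun S => ?_⟩
  have h1 : S.1.card ≤ r := by
    have := Finset.card_le_univ S.1
    simpa using this
  have h2 := S.2
  omega

lemma ExJ_of_lt (f : Fin r → A) (J : Ideal A) {p : ℕ} (h : r < p) : ExJ f J p :=
  fun _ _ => ⟨0, fun T => ((isEmpty_level h).false T).elim⟩

lemma memJ_d (f : Fin r → A) (J : Ideal A) {p : ℕ} (z : KoszulTerm A r (p + 1))
    (hz : ∀ T, z T ∈ J) : ∀ T, koszulD f p z T ∈ J := by
  intro T
  rw [koszulD_apply]
  refine Submodule.sum_mem _ fun i _ => ?_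
  by_cases hi : i ∈ T.1
  · rw [dif_pos hi]; exact J.zero_mem
  · rw [dif_neg hi]; exact Ideal.mul_mem_left _ _ (hz _)

lemma d_mem_span (f : Fin r → A) {p : ℕ} (w : KoszulTerm A r (p + 1)) :
    ∀ T, koszulD f p w T ∈ Ideal.span (Set.range f) := by
  intro T
  rw [koszulD_apply]
  refine Submodule.sum_mem _ fun i _ => ?_
  by_cases hi : i ∈ T.1
  · rw [dif_pos hi]; exact Submodule.zero_mem _
  · rw [dif_neg hi, mul_right_comm]
    exact Ideal.mul_mem_left _ _ (Ideal.subset_span ⟨i, rfl⟩)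

lemma memJ_theta (J : Ideal A) (j : Fin r) {p : ℕ} (z : KoszulTerm A r p)
    (hz : ∀ T, z T ∈ J) : ∀ T, theta j z T ∈ J := by
  intro T
  simp only [theta]
  split_ifs
  · exact Ideal.mul_mem_left _ _ (hz _)
  · exact J.zero_mem

lemma sub_d_theta_mem (f : Fin r → A) (J : Ideal A) (j : Fin r) {p : ℕ}
    (z : KoszulTerm A r p) (hz : cyc f J z) :
    ∀ T, f j * z T - koszulD f p (theta j z) T ∈ J := by
  cases p with
  | zero =>
    intro T
    rw [d_theta_zero]
    show f j * z T - (f j • z) T ∈ J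
    simp
  | succ q =>
    intro T
    have h := congrFun (d_theta_succ f j z) T
    simp only [Pi.add_apply, Pi.smul_apply, smul_eq_mul] at h
    have h2 : f j * z T - koszulD f (q + 1) (theta j z) T = theta j (koszulD f q z) T := by
      linear_combination -h
    rw [h2]
    exact memJ_theta J j _ hz T

lemma smul_sub_d_mem (f : Fin r → A) (J : Ideal A) {g : A}
    (hg : g ∈ Ideal.span (Set.range f)) {p : ℕ} (z : KoszulTerm A r p) (hz : cyc f J z) :
    ∃ u : KoszulTerm A r (p + 1), ∀ T, g * z T - koszulD f p u T ∈ J := by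
  obtain ⟨c, hc⟩ := Ideal.mem_span_range_iff_exists_fun.1 hg
  refine ⟨∑ j, c j • theta j z, fun T => ?_⟩
  have hd : koszulD f p (∑ j, c j • theta j z) T
      = ∑ j, c j * koszulD f p (theta j z) T := by
    rw [map_sum]
    simp only [map_smul]
    rw [Finset.sum_apply]
    simp [Pi.smul_apply, smul_eq_mul]
  rw [hd, ← hc, Finset.sum_mul, ← Finset.sum_sub_distrib]
  refine Submodule.sum_mem _ fun j _ => ?_
  have h1 : c j * f j * z T - c j * koszulD f p (theta j z) T
      = c j * (f j * z T - koszulD f p (theta j z) T) := by ring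
  rw [h1]
  exact Ideal.mul_mem_left _ _ (sub_d_theta_mem f J j z hz T)

/-- `g` is a (weakly) regular sequence modulo `J`. -/
def RegMod (J : Ideal A) {n : ℕ} (g : Fin n → A) : Prop :=
  ∀ (i : Fin n) (x : A), g i * x ∈ J ⊔ Ideal.span (g '' {j | j < i}) →
    x ∈ J ⊔ Ideal.span (g '' {j | j < i})

lemma tailReg {n : ℕ} (g : Fin (n + 1) → A) (J : Ideal A) (hreg : RegMod J g) :
    RegMod (J ⊔ Ideal.span {g 0}) (g ∘ Fin.succ) := by
  intro i x
  have hset : g '' {j : Fin (n + 1) | j < i.succ}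
      = insert (g 0) ((g ∘ Fin.succ) '' {j : Fin n | j < i}) := by
    ext y
    constructor
    · rintro ⟨j, hj, rfl⟩
      rcases Fin.eq_zero_or_eq_succ j with h0 | ⟨k, rfl⟩
      · exact Or.inl (by rw [h0])
      · exact Or.inr ⟨k, Fin.succ_lt_succ_iff.1 hj, rfl⟩
    · intro hy
      rcases hy with h0 | ⟨k, hk, rfl⟩
      · exact ⟨0, Fin.succ_pos i, h0.symm⟩
      · exact ⟨k.succ, Fin.succ_lt_succ_iff.2 hk, rfl⟩
  have hideal : J ⊔ Ideal.span (g '' {j | j < i.succ})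
      = (J ⊔ Ideal.span {g 0}) ⊔ Ideal.span ((g ∘ Fin.succ) '' {j | j < i}) := by
    rw [hset, Ideal.span_insert, sup_assoc]
  intro hx
  rw [← hideal] at hx
  have h2 := hreg i.succ x hx
  rw [hideal] at h2
  exact h2

lemma prefixReg {k m : ℕ} (h : m ≤ k) (g : Fin k → A) (J : Ideal A) (hreg : RegMod J g) :
    RegMod J (g ∘ Fin.castLE h) := by
  intro i x
  have hset : (g ∘ Fin.castLE h) '' {j : Fin m | j < i}
      = g '' {j : Fin k | j < Fin.castLE h i} := by
    ext y
    constructor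
    · rintro ⟨j, hj, rfl⟩
      exact ⟨Fin.castLE h j, hj, rfl⟩
    · rintro ⟨j, hj, rfl⟩
      have hj1 : j.1 < i.1 := hj
      exact ⟨⟨j.1, lt_trans hj1 i.isLt⟩, hj1, congrArg g (Fin.ext rfl)⟩
  intro hx
  rw [hset] at hx
  rw [hset]
  exact hreg (Fin.castLE h i) x hx

theorem mainLemma (f : Fin r → A) : ∀ (n : ℕ) (g : Fin n → A) (J : Ideal A),
    (∀ i, g i ∈ Ideal.span (Set.range f)) → RegMod J g → ∀ p, r < p + n → ExJ f J p := by
  intro n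
  induction n with
  | zero => intro g J _ _ p hp; exact ExJ_of_lt f J (by omega)
  | succ n ih =>
    intro g J hg hreg p hp z hz
    have h0 : ∀ x : A, g 0 * x ∈ J → x ∈ J := by
      intro x hx
      have hset : {j : Fin (n + 1) | j < 0} = (∅ : Set (Fin (n + 1))) := by
        ext j; simp [Fin.not_lt_zero]
      have hJ : J ⊔ Ideal.span (g '' {j : Fin (n + 1) | j < 0}) = J := by
        rw [hset, Set.image_empty, Ideal.span_empty, sup_bot_eq]
      have h1 := hreg 0 x (by rw [hJ]; exact hx)
      rw [hJ] at h1
      exact h1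
    obtain ⟨u, hu⟩ := smul_sub_d_mem f J (hg 0) z hz
    have hcyc' : cyc f (J ⊔ Ideal.span {g 0}) u := by
      show ∀ T, koszulD f p u T ∈ J ⊔ Ideal.span {g 0}
      intro T
      have h1 : koszulD f p u T = -(g 0 * z T - koszulD f p u T) + g 0 * z T := by ring
      rw [h1]
      refine Submodule.add_mem _ ?_ ?_
      · exact Submodule.mem_sup_left (Submodule.neg_mem _ (hu T))
      · exact Submodule.mem_sup_right
          (Ideal.mul_mem_right _ _ (Ideal.subset_span rfl))
    obtain ⟨v, hv⟩ := ih (g ∘ Fin.succ) (J ⊔ Ideal.span {g 0}) (fun i => hg i.succ)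
      (tailReg g J hreg) (p + 1) (by omega) u hcyc'
    have hdec : ∀ T, ∃ a ∈ J, ∃ b : A, a + b * g 0 = u T - koszulD f (p + 1) v T := by
      intro T
      obtain ⟨a, ha, c, hc, hsum⟩ := Submodule.mem_sup.1 (hv T)
      obtain ⟨b, hb⟩ := Ideal.mem_span_singleton'.1 hc
      exact ⟨a, ha, b, by rw [hb]; exact hsum⟩
    choose a ha b hab using hdec
    refine ⟨b, fun T => ?_⟩
    apply h0
    have hueq : u = koszulD f (p + 1) v + a + g 0 • b := by
      funext U
      show u U = koszulD f (p + 1) v U + a U + g 0 * b U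
      linear_combination -hab U
    have hdu : ∀ U, koszulD f p u U = koszulD f p a U + g 0 * koszulD f p b U := by
      intro U
      rw [hueq, map_add, map_add, koszulD_koszulD, map_smul]
      show ((0 : KoszulTerm A r p) + koszulD f p a + g 0 • koszulD f p b) U = _
      simp [Pi.add_apply, Pi.smul_apply, smul_eq_mul]
    have key : g 0 * (z T - koszulD f p b T)
        = (g 0 * z T - koszulD f p u T) + koszulD f p a T := by
      linear_combination hdu T
    rw [key]
    exact Submodule.add_mem _ (hu T) (memJ_d f J a ha T)

lemma L2 (f : Fin r → A) (J : Ideal A) (g : A) (hgI : g ∈ Ideal.span (Set.range f))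
    (hreg : ∀ x, g * x ∈ J → x ∈ J) (p : ℕ) (hp : ExJ f J p) (hp1 : ExJ f J (p + 1)) :
    ExJ f (J ⊔ Ideal.span {g}) (p + 1) := by
  intro z hz
  have hz' : ∀ T, koszulD f p z T ∈ J ⊔ Ideal.span {g} := hz
  have hdec : ∀ T, ∃ a ∈ J, ∃ b : A, a + b * g = koszulD f p z T := by
    intro T
    obtain ⟨a, ha, c, hc, hsum⟩ := Submodule.mem_sup.1 (hz' T)
    obtain ⟨b, hb⟩ := Ideal.mem_span_singleton'.1 hc
    exact ⟨a, ha, b, by rw [hb]; exact hsum⟩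
  choose a ha b hab using hdec
  have hdz : koszulD f p z = a + g • b := by
    funext T
    show koszulD f p z T = a T + g * b T
    linear_combination -hab T
  have hcycb : cyc f J b := by
    cases p with
    | zero => trivial
    | succ q =>
      show ∀ U, koszulD f q b U ∈ J
      intro U
      have h1 : koszulD f q (a + g • b) = 0 := by
        rw [← hdz]; exact koszulD_koszulD f q z
      rw [map_add, map_smul] at h1
      have h2 := congrFun h1 U
      simp only [Pi.add_apply, Pi.smul_apply, smul_eq_mul, Pi.zero_apply] at h2
      have h3 : g * koszulD f q b U = - koszulD f q a U := by linear_combination h2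
      exact hreg _ (by rw [h3]; exact Submodule.neg_mem _ (memJ_d f J a ha U))
  obtain ⟨v, hv⟩ := hp b hcycb
  have hcycz' : cyc f J (z - g • v) := by
    show ∀ T, koszulD f p (z - g • v) T ∈ J
    intro T
    rw [map_sub, map_smul]
    show koszulD f p z T - (g • koszulD f p v) T ∈ J
    have hdzT : koszulD f p z T = a T + g * b T := by rw [hdz]; rfl
    have h5 : koszulD f p z T - (g • koszulD f p v) T
        = a T + g * (b T - koszulD f p v T) := by
      show koszulD f p z T - g * koszulD f p v T = _
      linear_combination hdzT
    rw [h5]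
    exact Submodule.add_mem _ (ha T) (Ideal.mul_mem_left _ _ (hv T))
  obtain ⟨w, hw⟩ := hp1 (z - g • v) hcycz'
  refine ⟨w, fun T => ?_⟩
  have h4 : z T - koszulD f (p + 1) w T
      = ((z - g • v) T - koszulD f (p + 1) w T) + g * v T := by
    simp only [Pi.sub_apply, Pi.smul_apply, smul_eq_mul]
    ring
  rw [h4]
  exact Submodule.add_mem _ (Submodule.mem_sup_left (hw T))
    (Submodule.mem_sup_right (Ideal.mul_mem_right _ _ (Ideal.subset_span rfl)))

lemma iterEx (f : Fin r → A) {m : ℕ} (g : Fin m → A)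
    (hg : ∀ i, g i ∈ Ideal.span (Set.range f)) (hreg : RegMod ⊥ g)
    (hbase : ∀ p, 1 ≤ p → ExJ f ⊥ p) :
    ∀ k, k ≤ m → ∀ p, k < p → ExJ f (Ideal.span (g '' {j | (j : ℕ) < k})) p := by
  intro k
  induction k with
  | zero =>
    intro _ p hp
    have hset : {j : Fin m | (j : ℕ) < 0} = (∅ : Set (Fin m)) := by ext; simp
    rw [hset, Set.image_empty, Ideal.span_empty]
    exact hbase p hp
  | succ k ihk =>
    intro hk p hp
    have hkm : k < m := by omega
    have hset : {j : Fin m | (j : ℕ) < k + 1}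
        = insert (⟨k, hkm⟩ : Fin m) {j : Fin m | (j : ℕ) < k} := by
      ext j
      simp only [Set.mem_setOf_eq, Set.mem_insert_iff, Fin.ext_iff]
      omega
    have hspan : Ideal.span (g '' {j : Fin m | (j : ℕ) < k + 1})
        = Ideal.span (g '' {j | (j : ℕ) < k}) ⊔ Ideal.span {g ⟨k, hkm⟩} := by
      rw [hset, Set.image_insert_eq, Ideal.span_insert, sup_comm]
    have hregk : ∀ x, g ⟨k, hkm⟩ * x ∈ Ideal.span (g '' {j | (j : ℕ) < k}) →
        x ∈ Ideal.span (g '' {j | (j : ℕ) < k}) := by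
      intro x hx
      have hseteq : {j : Fin m | j < (⟨k, hkm⟩ : Fin m)} = {j : Fin m | (j : ℕ) < k} := by
        ext j; simp [Fin.lt_def]
      have h1 := hreg ⟨k, hkm⟩ x (by rw [bot_sup_eq, hseteq]; exact hx)
      rw [bot_sup_eq, hseteq] at h1
      exact h1
    obtain ⟨q, rfl⟩ : ∃ q, p = q + 1 := ⟨p - 1, by omega⟩
    rw [hspan]
    exact L2 f _ _ (hg ⟨k, hkm⟩) hregk q (ihk (by omega) q (by omega))
      (ihk (by omega) (q + 1) (by omega))

lemma exists_regular_elt [IsNoetherianRing A] (f : Fin r → A) (J : Ideal A)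
    (hC : ∀ x : A, (∀ t, f t * x ∈ J) → x ∈ J) :
    ∃ h ∈ Ideal.span (Set.range f), ∀ x, h * x ∈ J → x ∈ J := by
  by_contra hnot
  push_neg at hnot
  classical
  obtain ⟨s, hsinf, hsprim⟩ := Submodule.isLasker A A J
  obtain ⟨t, hts, htinf, htirr⟩ := Ideal.decomposition_erase_inf hsinf
  set I := Ideal.span (Set.range f) with hI
  have hsub : (I : Set A) ⊆ ⋃ Q ∈ (↑t : Set (Ideal A)), (Ideal.radical Q : Set A) := by
    intro h hh
    obtain ⟨x, hx1, hx2⟩ := hnot h hh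
    have hxt : ∃ Q ∈ t, x ∉ Q := by
      by_contra hc
      push_neg at hc
      exact hx2 (htinf ▸ (Submodule.mem_finsetInf.2 hc))
    obtain ⟨Q, hQt, hxQ⟩ := hxt
    have hprimQ : Q.IsPrimary := hsprim (hts hQt)
    have hJQ : J ≤ Q := htinf ▸ Finset.inf_le hQt
    have hxh : x * h ∈ Q := by rw [mul_comm]; exact hJQ hx1
    rcases (Ideal.isPrimary_iff.1 hprimQ).2 hxh with h1 | h2
    · exact absurd h1 hxQ
    · exact Set.mem_biUnion hQt h2
  obtain ⟨Q, hQt, hIQ⟩ := (Ideal.subset_union_prime ⊤ ⊤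
    (fun Q hQ _ _ => Ideal.isPrime_radical (hsprim (hts hQ)))).1 hsub
  obtain ⟨N, hN⟩ := Ideal.exists_pow_le_of_le_radical_of_fg_radical hIQ
    (IsNoetherian.noetherian _)
  have hJQ : J ≤ Q := htinf ▸ Finset.inf_le hQt
  have herase : ¬ (t.erase Q).inf id ≤ J := fun hle => htirr hQt (hle.trans hJQ)
  obtain ⟨x₀, hx₀mem, hx₀J⟩ := SetLike.not_le_iff_exists.1 herase
  have hPN : I ^ N * Ideal.span {x₀} ≤ J := by
    rw [Ideal.mul_le]
    intro rr hrr ss hss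
    obtain ⟨c, hc⟩ := Ideal.mem_span_singleton'.1 hss
    rw [← htinf]
    refine Submodule.mem_finsetInf.2 fun Q' hQ' => ?_
    by_cases hQQ : Q' = Q
    · subst hQQ
      exact Ideal.mul_mem_right _ _ (hN hrr)
    · have hx₀Q' : x₀ ∈ Q' :=
        Submodule.mem_finsetInf.1 hx₀mem Q' (Finset.mem_erase.2 ⟨hQQ, hQ'⟩)
      have : rr * ss = (rr * c) * x₀ := by rw [← hc]; ring
      rw [this]
      exact Ideal.mul_mem_left _ _ hx₀Q'
  have hP0 : ¬ (I ^ 0 * Ideal.span {x₀} ≤ J) := by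
    rw [pow_zero, one_mul]
    intro hle
    exact hx₀J (hle (Ideal.subset_span rfl))
  have hstep : ∀ M, I ^ M * Ideal.span {x₀} ≤ J →
      ∃ k, ¬ (I ^ k * Ideal.span {x₀} ≤ J) ∧ I ^ (k + 1) * Ideal.span {x₀} ≤ J := by
    intro M
    induction M with
    | zero => intro hM; exact absurd hM hP0
    | succ M ihM =>
      intro hM
      by_cases hMM : I ^ M * Ideal.span {x₀} ≤ J
      · exact ihM hMM
      · exact ⟨M, hMM, hM⟩
  obtain ⟨k, hk1, hk2⟩ := hstep N hPN
  obtain ⟨y, hy, hyJ⟩ := SetLike.not_le_iff_exists.1 hk1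
  refine hyJ (hC y fun t' => ?_)
  have h1 : f t' * y ∈ I * (I ^ k * Ideal.span {x₀}) :=
    Ideal.mul_mem_mul (Ideal.subset_span ⟨t', rfl⟩) hy
  have h2 : I * (I ^ k * Ideal.span {x₀}) = I ^ (k + 1) * Ideal.span {x₀} := by
    rw [← mul_assoc, ← pow_succ']
  exact hk2 (h2 ▸ h1)

lemma regMod_of_isRegularSeq {k : ℕ} {g : Fin k → A} (h : IsRegularSeq g) : RegMod ⊥ g := by
  intro i x hx
  rw [bot_sup_eq] at hx ⊢
  exact h.2 i x hx

lemma exact_to_ExJ (f : Fin r → A)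
    (hex : ∀ p : ℕ, LinearMap.ker (koszulD f p) = LinearMap.range (koszulD f (p + 1))) :
    ∀ p, 1 ≤ p → ExJ f ⊥ p := by
  intro p hp
  obtain ⟨q, rfl⟩ : ∃ q, p = q + 1 := ⟨p - 1, by omega⟩
  intro z hz
  have hz' : ∀ T, koszulD f q z T ∈ (⊥ : Ideal A) := hz
  have hz0 : z ∈ LinearMap.ker (koszulD f q) := by
    rw [LinearMap.mem_ker]
    funext T
    simpa using hz' T
  rw [hex q] at hz0
  obtain ⟨w, hw⟩ := hz0
  exact ⟨w, fun T => by rw [hw]; simp⟩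

lemma depth_le (f : Fin r → A) (hproper : Ideal.span (Set.range f) ≠ ⊤) :
    ∀ k, depthGE (Ideal.span (Set.range f)) k → k ≤ r := by
  intro k hk
  by_contra hgt
  push_neg at hgt
  obtain ⟨g, hgI, hgreg⟩ := hk
  have hle : (r + 1) ≤ k := hgt
  have hreg' : RegMod ⊥ (g ∘ Fin.castLE hle) :=
    prefixReg hle g ⊥ (regMod_of_isRegularSeq hgreg)
  have hEx0 := mainLemma f (r + 1) (g ∘ Fin.castLE hle) ⊥
    (fun i => hgI _) hreg' 0 (by omega)
  obtain ⟨w, hw⟩ := hEx0 (fun _ => 1) trivial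
  have hT := hw ⟨∅, Finset.card_empty⟩
  have h1 : (1 : A) - koszulD f 0 w ⟨∅, Finset.card_empty⟩ = 0 := by simpa using hT
  have h2 : (1 : A) ∈ Ideal.span (Set.range f) := by
    rw [sub_eq_zero.1 h1]
    exact d_mem_span f w ⟨∅, Finset.card_empty⟩
  exact hproper ((Ideal.eq_top_iff_one _).2 h2)

lemma buildSeq [IsNoetherianRing A] (f : Fin r → A)
    (hbase : ∀ p, 1 ≤ p → ExJ f ⊥ p) :
    ∀ j, j ≤ r → ∃ g : Fin j → A,
      (∀ i, g i ∈ Ideal.span (Set.range f)) ∧ RegMod ⊥ g := by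
  intro j
  induction j with
  | zero => intro _; exact ⟨Fin.elim0, fun i => i.elim0, fun i => i.elim0⟩
  | succ j ihj =>
    intro hj
    obtain ⟨g, hgI, hgreg⟩ := ihj (by omega)
    set J := Ideal.span (Set.range g) with hJdef
    have hJ : Ideal.span (g '' {i : Fin j | (i : ℕ) < j}) = J := by
      have huniv : {i : Fin j | (i : ℕ) < j} = Set.univ := by ext i; simp [i.isLt]
      rw [huniv, Set.image_univ]
    have hExJr : ExJ f J r := by
      have := iterEx f g hgI hgreg hbase j le_rfl r (by omega)
      rwa [hJ] at this
    have hC : ∀ x : A, (∀ t, f t * x ∈ J) → x ∈ J := by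
      intro x hx
      obtain ⟨q, hq⟩ : ∃ q, r = q + 1 := ⟨r - 1, by omega⟩
      subst hq
      have hcycz : cyc f J (fun _ => x : KoszulTerm A (q + 1) (q + 1)) := by
        show ∀ T, koszulD f q (fun _ => x) T ∈ J
        intro T
        rw [koszulD_apply]
        refine Submodule.sum_mem _ fun i _ => ?_
        by_cases hi : i ∈ T.1
        · rw [dif_pos hi]; exact J.zero_mem
        · rw [dif_neg hi, mul_assoc]
          exact Ideal.mul_mem_left _ _ (hx i)
      obtain ⟨w, hw⟩ := hExJr _ hcycz
      have hT := hw ⟨Finset.univ, by simp⟩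
      have h3 : koszulD f (q + 1) w ⟨Finset.univ, by simp⟩ = 0 := by
        rw [koszulD_apply]
        refine Finset.sum_eq_zero fun i _ => ?_
        rw [dif_pos (Finset.mem_univ i)]
      rw [h3] at hT
      simpa using hT
    obtain ⟨h, hhI, hhreg⟩ := exists_regular_elt f J hC
    refine ⟨Fin.snoc g h, ?_, ?_⟩
    · intro i
      refine Fin.lastCases ?_ ?_ i
      · rw [Fin.snoc_last]; exact hhI
      · intro k; rw [Fin.snoc_castSucc]; exact hgI k
    · intro i
      have hsn : ∀ k' : Fin j, (Fin.snoc g h : Fin (j + 1) → A) (Fin.castSucc k') = g k' :=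
        fun k' => by simp
      refine Fin.lastCases ?_ ?_ i
      · intro x hx
        have hset : (Fin.snoc g h : Fin (j + 1) → A) '' {j' : Fin (j + 1) | j' < Fin.last j}
            = Set.range g := by
          ext y
          constructor
          · rintro ⟨j', hj', rfl⟩
            have hj'' : (j' : ℕ) < j := hj'
            exact ⟨⟨j'.1, hj''⟩,
              (hsn ⟨j'.1, hj''⟩).symm.trans (congrArg (Fin.snoc g h) (Fin.ext rfl))⟩
          · rintro ⟨k, rfl⟩
            exact ⟨Fin.castSucc k, k.isLt, hsn k⟩
        rw [bot_sup_eq, hset] at hx ⊢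
        rw [Fin.snoc_last] at hx
        exact hhreg x hx
      · intro k x hx
        have hset : (Fin.snoc g h : Fin (j + 1) → A) '' {j' : Fin (j + 1) | j' < Fin.castSucc k}
            = g '' {i' : Fin j | i' < k} := by
          ext y
          constructor
          · rintro ⟨j', hj', rfl⟩
            have hval : (j' : ℕ) < (k : ℕ) := hj'
            have hjj : (j' : ℕ) < j := lt_trans hval k.isLt
            exact ⟨⟨j'.1, hjj⟩, hval,
              (hsn ⟨j'.1, hjj⟩).symm.trans (congrArg (Fin.snoc g h) (Fin.ext rfl))⟩
          · rintro ⟨i', hi', rfl⟩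
            exact ⟨Fin.castSucc i', hi', hsn i'⟩
        rw [bot_sup_eq, hset] at hx ⊢
        rw [hsn k] at hx
        have h1 := hgreg k x (by rw [bot_sup_eq]; exact hx)
        rw [bot_sup_eq] at h1
        exact h1

end KProof

/-- **Eagon–Northcott, case `s = 1` (depth sensitivity of the Koszul complex).**
Let `R` be a commutative Noetherian ring and `f₁,…,fᵣ` generators of a proper ideal `I`.
The Koszul complex `K_•(f₁,…,fᵣ)` has vanishing homology in all positive homological
degrees (i.e. is exact at `K_p` for every `p ≥ 1`) if and only if `depth I = r`. -/
theorem koszul_exact_iff_depth_eq {A : Type} [CommRing A] [IsNoetherianRing A] {r : ℕ}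
    (f : Fin r → A) (hproper : Ideal.span (Set.range f) ≠ ⊤) :
    (∀ p : ℕ, LinearMap.ker (koszulD f p) = LinearMap.range (koszulD f (p + 1))) ↔
      depthEq (Ideal.span (Set.range f)) r := by
  constructor
  · intro hex
    have hbase := KProof.exact_to_ExJ f hex
    constructor
    · obtain ⟨g, hgI, hgreg⟩ := KProof.buildSeq f hbase r le_rfl
      refine ⟨g, hgI, ?_, ?_⟩
      · intro htop
        apply hproper
        have hle : Ideal.span (Set.range g) ≤ Ideal.span (Set.range f) := by
          rw [Ideal.span_le]
          rintro _ ⟨i, rfl⟩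
          exact hgI i
        exact eq_top_iff.2 (htop ▸ hle)
      · intro i x hx
        have h1 := hgreg i x (by rw [bot_sup_eq]; exact hx)
        rw [bot_sup_eq] at h1
        exact h1
    · exact fun k hk => KProof.depth_le f hproper k hk
  · rintro ⟨⟨g, hgI, hgreg⟩, -⟩ p
    ext z
    simp only [LinearMap.mem_ker, LinearMap.mem_range]
    constructor
    · intro hz
      have hcyc : KProof.cyc f ⊥ z := by
        show ∀ T, koszulD f p z T ∈ (⊥ : Ideal A)
        intro T
        rw [hz]
        simp
      obtain ⟨w, hw⟩ := KProof.mainLemma f r g ⊥ hgI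
        (KProof.regMod_of_isRegularSeq hgreg) (p + 1) (by omega) z hcyc
      refine ⟨w, ?_⟩
      funext T
      have h1 := hw T
      exact (sub_eq_zero.1 (by simpa using h1)).symm
    · rintro ⟨w, rfl⟩
      exact KProof.koszulD_koszulD f p w


end
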